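/- With f as in the previous statement (f(x) = (8/3)(1-x)^{3/2} for x ≤ 0, f(x) = 8/3 - 4x + x² + x³/6 + x⁴/16 for x > 0), there do NOT exist c ≥ 0, a function f₊ ∈ C² with f₊ and f₊'' nondecreasing and convex, and a function f₋ ∈ C² with f₋ and f₋'' nonincreasing and convex, such that f(x) = c·x²/2 + f₊(x) + f₋(x) for all x ∈ ℝ. -/

import Mathlib

open Real

noncomputable def fEx (x : ℝ) : ℝ :=
  if x ≤ 0 then (8 / 3) * (1 - x) ^ ((3 : ℝ) / 2)
  else 8 / 3 - 4 * x + x ^ 2 + (1 / 6) * x ^ 3 + (1 / 16) * x ^ 4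

lemma rpow_three_halves {t : ℝ} (ht : 0 ≤ t) : t ^ ((3:ℝ)/2) = t * Real.sqrt t := by
  rw [show (3:ℝ)/2 = 1 + 1/2 by norm_num, Real.rpow_add' ht (by norm_num),
    Real.rpow_one, Real.sqrt_eq_rpow]

lemma key_bound {x : ℝ} (hx : x ≤ -1) :
    fEx (x-1) + fEx (x+1) - 2 * fEx x ≤ 8 / Real.sqrt (1 - x) := by
  have h1 : x - 1 ≤ 0 := by linarith
  have h2 : x + 1 ≤ 0 := by linarith
  have h3 : x ≤ 0 := by linarith
  rw [fEx, fEx, fEx, if_pos h1, if_pos h2, if_pos h3]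
  have ht0 : (0:ℝ) ≤ 1 - (x-1) := by linarith
  have ht1 : (0:ℝ) ≤ 1 - x := by linarith
  have ht2 : (0:ℝ) ≤ 1 - (x+1) := by linarith
  rw [rpow_three_halves ht0, rpow_three_halves ht1, rpow_three_halves ht2]
  set s2 := Real.sqrt (1 - (x-1)) with hs2
  set s0 := Real.sqrt (1 - x) with hs0
  set s1 := Real.sqrt (1 - (x+1)) with hs1
  have e2 : s2^2 = 1-(x-1) := Real.sq_sqrt ht0
  have e0 : s0^2 = 1-x := Real.sq_sqrt ht1
  have e1 : s1^2 = 1-(x+1) := Real.sq_sqrt ht2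
  have hs1ge : 1 ≤ s1 := by
    rw [hs1]; have := Real.sqrt_le_sqrt (show (1:ℝ) ≤ 1-(x+1) by linarith)
    simpa using this
  have h01 : s1 ≤ s0 := Real.sqrt_le_sqrt (by linarith)
  have h02 : s0 ≤ s2 := Real.sqrt_le_sqrt (by linarith)
  have hs0pos : 0 < s0 := by linarith
  rw [le_div_iff₀ hs0pos]
  have key : s0 * (s2^3 + s1^3 - 2*s0^3) ≤ 3 := by
    nlinarith [mul_pos (by linarith : (0:ℝ) < s0) (by linarith : (0:ℝ) < s2),
      sq_nonneg (s2 - s0), sq_nonneg (s0 - s1), sq_nonneg (s2 - s1),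
      mul_nonneg (by linarith : (0:ℝ) ≤ s2 - s0) (sq_nonneg (s2 - s0)),
      mul_nonneg (by linarith : (0:ℝ) ≤ s0 - s1) (sq_nonneg (s0 - s1))]
  rw [← e2, ← e0, ← e1]; nlinarith [key]

lemma deriv2_le_second_diff {f : ℝ → ℝ} (hf : ContDiff ℝ 2 f)
    (hA : Antitone (deriv (deriv f))) (x : ℝ) :
    deriv (deriv f) (x + 1) ≤ f (x-1) + f (x+1) - 2 * f x := by
  have h2 : ContDiff ℝ ((1:WithTop ℕ∞)+1) f := by exact_mod_cast hf
  obtain ⟨hdf, -, hdf1⟩ := contDiff_succ_iff_deriv.mp h2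
  have hdf' : Differentiable ℝ (deriv f) := hdf1.differentiable one_ne_zero
  set g : ℝ → ℝ := fun t => f (t+1) - f t with hg
  have hgderiv : ∀ t, HasDerivAt g (deriv f (t+1) - deriv f t) t := by
    intro t
    have h1 : HasDerivAt (fun t : ℝ => f (t+1)) (deriv f (t+1)) t := by
      have := ((hdf (t+1)).hasDerivAt).comp t ((hasDerivAt_id t).add_const 1)
      simpa [Function.comp_def] using this
    exact h1.sub (hdf t).hasDerivAt
  have hgdiff : Differentiable ℝ g := fun t => (hgderiv t).differentiableAt
  obtain ⟨ξ, hξ, hξeq⟩ := exists_deriv_eq_slope g (show x - 1 < x by linarith)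
    (hgdiff.continuous.continuousOn) (hgdiff.differentiableOn)
  obtain ⟨η, hη, hηeq⟩ := exists_deriv_eq_slope (deriv f) (show ξ < ξ + 1 by linarith)
    (hdf'.continuous.continuousOn) (hdf'.differentiableOn)
  have hgd : deriv g ξ = deriv f (ξ+1) - deriv f ξ := (hgderiv ξ).deriv
  have hη2 : η ≤ x + 1 := by
    have := hη.2; have := hξ.2; linarith
  rw [hgd] at hξeq
  have hslope : (g x - g (x-1)) / (x - (x-1)) = f (x-1) + f (x+1) - 2 * f x := by
    simp only [hg]; ring_nf
  rw [hslope] at hξeq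
  have hηs : deriv (deriv f) η = deriv f (ξ+1) - deriv f ξ := by
    rw [hηeq]; ring_nf
  have h5 : deriv (deriv f) η = f (x-1) + f (x+1) - 2 * f x := by rw [hηs, hξeq]
  linarith [hA hη2, h5]

lemma secondDiff_nonneg {f : ℝ → ℝ} (hf : ConvexOn ℝ Set.univ f) (x : ℝ) :
    0 ≤ f (x-1) + f (x+1) - 2 * f x := by
  have h := hf.2 (Set.mem_univ (x-1)) (Set.mem_univ (x+1))
    (by norm_num : (0:ℝ) ≤ 1/2) (by norm_num : (0:ℝ) ≤ 1/2) (by norm_num)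
  simp only [smul_eq_mul] at h
  rw [show (1/2:ℝ)*(x-1)+(1/2)*(x+1) = x by ring] at h
  linarith

lemma aux_le_zero {a b : ℝ} (h : ∀ x, x ≤ b → a ≤ 8 / Real.sqrt (1-x)) : a ≤ 0 := by
  by_contra h'
  push_neg at h'
  set x := min b (1 - (16/a)^2) with hx
  have hxb : x ≤ b := min_le_left _ _
  have h16 : 0 < 16/a := by positivity
  have h1x : (16/a)^2 ≤ 1 - x := by
    have : x ≤ 1 - (16/a)^2 := min_le_right _ _
    linarith
  have hs : 16/a ≤ Real.sqrt (1-x) := by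
    calc 16/a = Real.sqrt ((16/a)^2) := (Real.sqrt_sq h16.le).symm
    _ ≤ _ := Real.sqrt_le_sqrt h1x
  have hdv : 8 / Real.sqrt (1-x) ≤ 8 / (16/a) :=
    div_le_div_of_nonneg_left (by norm_num) h16 hs
  have h8 : (8:ℝ)/(16/a) = a/2 := by field_simp; ring
  have := h x hxb
  rw [h8] at hdv
  linarith

/-- `fEx` cannot be written as `c·x²/2 + f₊(x) + f₋(x)` with `c ≥ 0`,
`f₊ ∈ F₊³` (C², with `f₊` and `f₊''` nondecreasing and convex) and
`f₋ ∈ F₋³` (C², with `f₋` and `f₋''` nonincreasing and convex). -/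
theorem fEx_not_in_GG3 :
    ¬ ∃ (c : ℝ) (fp fm : ℝ → ℝ), 0 ≤ c ∧
      ContDiff ℝ 2 fp ∧ Monotone fp ∧ ConvexOn ℝ Set.univ fp ∧
        Monotone (deriv (deriv fp)) ∧ ConvexOn ℝ Set.univ (deriv (deriv fp)) ∧
      ContDiff ℝ 2 fm ∧ Antitone fm ∧ ConvexOn ℝ Set.univ fm ∧
        Antitone (deriv (deriv fm)) ∧ ConvexOn ℝ Set.univ (deriv (deriv fm)) ∧
      ∀ x : ℝ, fEx x = c * x ^ 2 / 2 + fp x + fm x := by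
  rintro ⟨c, fp, fm, hc, hfp2, hfpMono, hfpConv, hfp2Mono, hfp2Conv,
    hfm2, hfmAnti, hfmConv, hfm2Anti, hfm2Conv, heq⟩
  have hΔ : ∀ x : ℝ, x ≤ -1 →
      c + (fp (x-1) + fp (x+1) - 2*fp x) + (fm (x-1) + fm (x+1) - 2*fm x)
        ≤ 8 / Real.sqrt (1-x) := by
    intro x hx
    have h := key_bound hx
    rw [heq (x-1), heq (x+1), heq x] at h
    have hcid : c * (x-1)^2/2 + c * (x+1)^2/2 - 2 * (c * x^2/2) = c := by ring
    linarith
  have hfpΔ : ∀ x : ℝ, 0 ≤ fp (x-1) + fp (x+1) - 2*fp x := secondDiff_nonneg hfpConv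
  have hfmΔ : ∀ x : ℝ, 0 ≤ fm (x-1) + fm (x+1) - 2*fm x := secondDiff_nonneg hfmConv
  have hc0 : c = 0 := by
    refine le_antisymm (aux_le_zero (b := -1) (fun x hx => ?_)) hc
    have := hΔ x hx
    linarith [hfpΔ x, hfmΔ x]
  have hfm''le : ∀ y : ℝ, deriv (deriv fm) y ≤ 0 := by
    intro y
    apply aux_le_zero (b := min (y-1) (-1))
    intro x hx
    have hx1 : x ≤ -1 := le_trans hx (min_le_right _ _)
    have hxy : x + 1 ≤ y := by
      have := le_trans hx (min_le_left _ _); linarith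
    have h1 := deriv2_le_second_diff hfm2 hfm2Anti x
    have h2 := hfm2Anti hxy
    have h3 := hΔ x hx1
    linarith [hfpΔ x, h1, h2, hc]
  have h2 : ContDiff ℝ ((1:WithTop ℕ∞)+1) fm := by exact_mod_cast hfm2
  obtain ⟨hdfm, -, hdfm1⟩ := contDiff_succ_iff_deriv.mp h2
  have hconc : ConcaveOn ℝ Set.univ fm :=
    concaveOn_univ_of_deriv2_nonpos hdfm (hdfm1.differentiable one_ne_zero)
      (fun x => by
        simpa only [Function.iterate_succ, Function.iterate_zero, Function.comp_apply,
          Function.id_def] using hfm''le x)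
  -- linear growth bound on fm for x ≤ -1
  have hfmlin : ∀ x : ℝ, x ≤ -1 → fm x ≤ fm 0 - x * (fm (-1) - fm 0) := by
    intro x hx
    set t : ℝ := -x with htdef
    have ht1 : 1 ≤ t := by simp [htdef]; linarith
    have ht0 : 0 < t := by linarith
    have hinv : 1/t ≤ 1 := by
      rw [div_le_one ht0]; linarith
    have h := hconc.2 (Set.mem_univ x) (Set.mem_univ (0:ℝ))
      (by positivity : (0:ℝ) ≤ 1/t) (by linarith : (0:ℝ) ≤ 1 - 1/t)
      (by ring)
    simp only [smul_eq_mul, mul_zero, add_zero] at h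
    have hid : (1/t) * x = -1 := by
      rw [htdef]
      field_simp
      rw [div_self (by intro h0; linarith : x ≠ 0)]
    rw [hid] at h
    have h2 := mul_le_mul_of_nonneg_left h ht0.le
    have hid2 : t * ((1/t) * fm x + (1 - 1/t) * fm 0) = fm x + (t-1) * fm 0 := by
      field_simp
    rw [hid2] at h2
    have h3 : fm x ≤ t * fm (-1) - (t-1) * fm 0 := by linarith
    rw [htdef] at h3
    linarith [h3]
  -- final contradiction
  set A : ℝ := fp 0 + fm 0 with hA
  set B : ℝ := fm (-1) - fm 0 with hB
  have hB0 : 0 ≤ B := by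
    have := hfmAnti (show (-1:ℝ) ≤ 0 by norm_num)
    simp only [hB]; linarith
  set T : ℝ := max (A+2) (2 + (B+1)^2) with hT
  have hT2 : 2 ≤ T := le_trans (by nlinarith [sq_nonneg (B+1)]) (le_max_right _ _)
  have hTA : A + 2 ≤ T := le_max_left _ _
  set x : ℝ := -T with hxdef
  have hx1 : x ≤ -1 := by rw [hxdef]; linarith
  have hx0 : x ≤ 0 := by linarith
  set t : ℝ := 1 - x with htdef
  have ht3 : 3 ≤ t := by rw [htdef, hxdef]; linarith
  have hts : B + 1 ≤ Real.sqrt t := by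
    have h1 : (B+1)^2 ≤ t := by
      have : 2 + (B+1)^2 ≤ T := le_max_right _ _
      rw [htdef, hxdef]; linarith
    calc B + 1 = Real.sqrt ((B+1)^2) := (Real.sqrt_sq (by linarith)).symm
    _ ≤ _ := Real.sqrt_le_sqrt h1
  have hfval : fEx x = 8/3 * (t * Real.sqrt t) := by
    rw [fEx, if_pos hx0, ← htdef, rpow_three_halves (by linarith)]
  have hupper : fEx x ≤ A + t * B := by
    rw [heq x, hc0]
    have h1 : fp x ≤ fp 0 := hfpMono hx0
    have h2 : fm x ≤ fm 0 - x * B := hfmlin x hx1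
    have h3 : -x ≤ t := by rw [htdef]; linarith
    have h4 : (-x) * B ≤ t * B := mul_le_mul_of_nonneg_right h3 hB0
    simp only [hA]
    nlinarith [h1, h2, h4]
  have hlower : A + t * B + 2 ≤ 8/3 * (t * Real.sqrt t) := by
    have h1 : t * (B+1) ≤ t * Real.sqrt t := mul_le_mul_of_nonneg_left hts (by linarith)
    have h2 : 2 * (t * (B+1)) ≤ 8/3 * (t * Real.sqrt t) := by nlinarith [h1, ht3, hB0]
    have h3 : t * B + t ≤ 2 * (t * (B+1)) := by nlinarith [hB0, ht3]
    have h4 : A + 2 + 1 ≤ t := by rw [htdef, hxdef]; linarith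
    nlinarith [h2, h3, h4, hB0, ht3]
  rw [hfval] at hupper
  linarith
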